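/- Let f : 𝕋^d → ℂ have absolutely summable Fourier coefficients, let δ > 0, set I_δ := {k ∈ ℤ^d : |f̂_k| ≥ δ} (finite, nonempty), fix 1 ≤ t ≤ d, let k ∈ P_{{1,…,t}}(I_δ), and let 0 < δ' ≤ δ/√2. Denote g_k(ξ) := f̂_{{1,…,t},k}(ξ) for ξ ∈ 𝕋^{d−t}. Then ‖g_k‖_{L2(𝕋^{d−t})}² − δ'² > 0 and ‖g_k‖_{L∞(𝕋^{d−t})}² / (‖g_k‖_{L2(𝕋^{d−t})}² − δ'²) ≤ 4|I_δ| + (4/δ²)(Σ_{l∉I_δ} |f̂_l|)². -/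

import Mathlib

open MeasureTheory Complex

noncomputable section

/-- The unit cube `[0,1)^d`, a fundamental domain of the torus `𝕋^d = (ℝ/ℤ)^d`.
Functions on the torus are modelled as (1-periodic) functions on `ℝ^d`. -/
def cube (d : ℕ) : Set (Fin d → ℝ) := Set.univ.pi fun _ => Set.Ico (0 : ℝ) 1

/-- The uniform probability measure on the torus `𝕋^d`. -/
def torusMeasure (d : ℕ) : Measure (Fin d → ℝ) := volume.restrict (cube d)

/-- The exponential `exp(2πi⟨k,x⟩)`. -/
def char {d : ℕ} (k : Fin d → ℤ) (x : Fin d → ℝ) : ℂ :=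
  Complex.exp (2 * Real.pi * Complex.I * ∑ t, (k t : ℂ) * (x t : ℂ))

/-- The Fourier coefficient `f̂_k = ∫_{𝕋^d} f(x) e^{-2πi⟨k,x⟩} dx`. -/
def fCoeff {d : ℕ} (f : (Fin d → ℝ) → ℂ) (k : Fin d → ℤ) : ℂ :=
  ∫ x, f x * (starRingEnd ℂ) (char k x) ∂(torusMeasure d)

/-- The projection `P_I f = ∑_{k ∈ I} f̂_k e^{2πi⟨k,·⟩}`. -/
def projF {d : ℕ} (I : Finset (Fin d → ℤ)) (f : (Fin d → ℝ) → ℂ) : (Fin d → ℝ) → ℂ :=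
  fun x => ∑ k ∈ I, fCoeff f k * char k x

/-- Squared `L_2` norm on the torus. -/
def L2sq {d : ℕ} (g : (Fin d → ℝ) → ℂ) : ℝ := ∫ x, ‖g x‖ ^ 2 ∂(torusMeasure d)

/-- Supremum norm on the torus. -/
def supNorm {d : ℕ} (g : (Fin d → ℝ) → ℂ) : ℝ := ⨆ x ∈ cube d, ‖g x‖

/-- `f` has an absolutely convergent Fourier series. -/
def HasAbsFourierSeries {d : ℕ} (f : (Fin d → ℝ) → ℂ) : Prop :=
  Summable (fun k : Fin d → ℤ => ‖fCoeff f k‖) ∧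
    ∀ x, HasSum (fun k : Fin d → ℤ => fCoeff f k * char k x) (f x)

/-- The nodes of the rank-1 lattice with generating vector `z` and size `M`:
`xⁱ = (i z mod M 𝟙)/M`. -/
def lattice {d : ℕ} (z : Fin d → ℝ) (M : ℕ) : Fin M → (Fin d → ℝ) :=
  fun i t => Int.fract ((i : ℝ) * z t / M)

/-- A node set `x¹,…,x^M` is reconstructing for `I` if
`(1/M) ∑_i exp(2πi⟨k,xⁱ⟩) = δ_{0,k}` for all `k ∈ D(I) = {k - l : k, l ∈ I}`. -/
def IsReconstructing {d M : ℕ} (x : Fin M → (Fin d → ℝ)) (I : Finset (Fin d → ℤ)) : Prop :=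
  ∀ k ∈ I, ∀ l ∈ I,
    (M : ℂ)⁻¹ * ∑ i, char (k - l) (x i) = if k - l = 0 then 1 else 0

/-- `g` is a least squares approximation of `f` at the nodes `p` from the span of the
exponentials with frequencies in `I`. -/
def IsLSQ {d n : ℕ} (p : Fin n → (Fin d → ℝ)) (I : Finset (Fin d → ℤ))
    (f g : (Fin d → ℝ) → ℂ) : Prop :=
  (∃ c : (Fin d → ℤ) → ℂ, g = fun x => ∑ k ∈ I, c k * char k x) ∧
    ∀ c : (Fin d → ℤ) → ℂ,
      (∑ i, ‖g (p i) - f (p i)‖ ^ 2) ≤ ∑ i, ‖(∑ k ∈ I, c k * char k (p i)) - f (p i)‖ ^ 2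

/-- The uniform probability measure on `Fin M`. -/
def unif (M : ℕ) [NeZero M] : Measure (Fin M) := (PMF.uniformOfFintype (Fin M)).toMeasure

/-- Concatenation of `x ∈ 𝕋^t` and `ξ ∈ 𝕋^{d-t}` into a point of `𝕋^d`. -/
def glue {d t : ℕ} (h : t ≤ d) (x : Fin t → ℝ) (ξ : Fin (d - t) → ℝ) : Fin d → ℝ :=
  fun j => Fin.append x ξ (Fin.cast (by omega) j)

/-- Concatenation of integer frequency vectors. -/
def glueZ {d t : ℕ} (h : t ≤ d) (k : Fin t → ℤ) (l : Fin (d - t) → ℤ) : Fin d → ℤ :=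
  fun j => Fin.append k l (Fin.cast (by omega) j)

/-- The projected Fourier coefficient `f̂_{{1,…,t},k}(ξ) = ∫_{𝕋^t} f(x,ξ) e^{-2πi⟨k,x⟩} dx`. -/
def projCoeff {d t : ℕ} (h : t ≤ d) (f : (Fin d → ℝ) → ℂ)
    (k : Fin t → ℤ) (ξ : Fin (d - t) → ℝ) : ℂ :=
  ∫ x, f (glue h x ξ) * (starRingEnd ℂ) (char k x) ∂(torusMeasure t)

/-- Projection `P_{{1,…,t}}(I)` of a frequency set onto the first `t` components. -/
def projFreq {d t : ℕ} (h : t ≤ d) (I : Finset (Fin d → ℤ)) : Finset (Fin t → ℤ) :=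
  I.image fun k => fun j => k (Fin.castLE h j)

/-- Projection `P_{I_M × ℤ^{d-t}} f` onto a cylindrical frequency set. -/
def projCyl {d t : ℕ} (h : t ≤ d) (IM : Finset (Fin t → ℤ)) (f : (Fin d → ℝ) → ℂ) :
    (Fin d → ℝ) → ℂ :=
  fun x => ∑' k : {k : Fin d → ℤ // (fun j => k (Fin.castLE h j)) ∈ IM},
    fCoeff f (k : Fin d → ℤ) * char (k : Fin d → ℤ) x

/-- The tail sum `∑_{k ∉ I} |f̂_k|`. -/
def tailSum {d : ℕ} (f : (Fin d → ℝ) → ℂ) (I : Finset (Fin d → ℤ)) : ℝ :=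
  ∑' k : {k : Fin d → ℤ // k ∉ I}, ‖fCoeff f (k : Fin d → ℤ)‖

/-! ### Auxiliary lemmas -/

namespace ProjAux

lemma char_eq {d : ℕ} (c : Fin d → ℤ) (x : Fin d → ℝ) :
    char c x = Complex.exp (((2 * Real.pi * ∑ t, (c t : ℝ) * x t : ℝ)) * Complex.I) := by
  unfold char
  congr 1
  push_cast
  ring

lemma norm_char {d : ℕ} (c : Fin d → ℤ) (x : Fin d → ℝ) : ‖char c x‖ = 1 := by
  rw [char_eq, Complex.norm_exp_ofReal_mul_I]

lemma conj_char {d : ℕ} (c : Fin d → ℤ) (x : Fin d → ℝ) :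
    (starRingEnd ℂ) (char c x) = char (-c) x := by
  have hs : (∑ i, ((-c) i : ℝ) * x i) = -∑ i, (c i : ℝ) * x i := by
    simp [neg_mul, Finset.sum_neg_distrib]
  rw [char_eq, char_eq, ← Complex.exp_conj]
  congr 1
  rw [map_mul, Complex.conj_I, Complex.conj_ofReal, hs]
  push_cast
  ring

lemma char_mul {d : ℕ} (a b : Fin d → ℤ) (x : Fin d → ℝ) :
    char a x * char b x = char (a + b) x := by
  have hs : (∑ i, ((a + b) i : ℝ) * x i) = (∑ i, (a i : ℝ) * x i) + ∑ i, (b i : ℝ) * x i := by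
    simp [add_mul, Finset.sum_add_distrib]
  rw [char_eq, char_eq, char_eq, ← Complex.exp_add, hs]
  congr 1
  push_cast
  ring

lemma char_mul_conj {d : ℕ} (a b : Fin d → ℤ) (x : Fin d → ℝ) :
    char a x * (starRingEnd ℂ) (char b x) = char (a - b) x := by
  rw [conj_char, char_mul, sub_eq_add_neg]

lemma char_continuous {d : ℕ} (c : Fin d → ℤ) : Continuous (char c) := by
  unfold char
  refine Complex.continuous_exp.comp (continuous_const.mul ?_)
  refine continuous_finset_sum _ fun i _ => continuous_const.mul ?_
  exact Complex.continuous_ofReal.comp (continuous_apply i)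

/-- Type synonym for `ℝ` carrying the uniform measure on `[0,1)` as volume. -/
def UnitT : Type := ℝ

instance : MeasurableSpace UnitT := inferInstanceAs (MeasurableSpace ℝ)

instance : MeasureSpace UnitT :=
  { volume := (MeasureTheory.volume : Measure ℝ).restrict (Set.Ico 0 1) }

instance : SigmaFinite (MeasureTheory.volume : Measure UnitT) :=
  inferInstanceAs (SigmaFinite ((MeasureTheory.volume : Measure ℝ).restrict (Set.Ico 0 1)))

lemma torusMeasure_eq_pi (n : ℕ) :
    torusMeasure n = Measure.pi (fun _ : Fin n => (volume : Measure ℝ).restrict (Set.Ico 0 1)) := by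
  refine (Measure.pi_eq fun s hs => ?_).symm
  rw [torusMeasure, cube, Measure.restrict_apply (MeasurableSet.univ_pi hs),
    ← Set.pi_inter_distrib]
  rw [MeasureTheory.volume_pi_pi]
  exact Finset.prod_congr rfl fun i _ => (Measure.restrict_apply (hs i)).symm

instance torus_prob (n : ℕ) : IsProbabilityMeasure (torusMeasure n) := by
  constructor
  rw [torusMeasure, Measure.restrict_apply_univ, cube, MeasureTheory.volume_pi_pi]
  simp [Real.volume_Ico]

def oneD (m : ℤ) (y : ℝ) : ℂ := Complex.exp (2 * (Real.pi : ℂ) * Complex.I * m * y)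

lemma oneD_integral (m : ℤ) :
    ∫ y, oneD m y ∂((volume : Measure ℝ).restrict (Set.Ico 0 1)) = if m = 0 then 1 else 0 := by
  unfold oneD
  by_cases hm : m = 0
  · subst hm
    simp [MeasureTheory.integral_const, Real.volume_Ico]
  · rw [if_neg hm]
    have hc : (2 * (Real.pi : ℂ) * Complex.I * m) ≠ 0 := by
      simp [Real.pi_ne_zero, Complex.I_ne_zero, hm]
    have h1 : (∫ y in Set.Ico (0:ℝ) 1, Complex.exp (2 * (Real.pi : ℂ) * Complex.I * m * y))
        = ∫ y in Set.Ioc (0:ℝ) 1, Complex.exp (2 * (Real.pi : ℂ) * Complex.I * m * y) :=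
      MeasureTheory.setIntegral_congr_set MeasureTheory.Ico_ae_eq_Ioc
    rw [h1, ← intervalIntegral.integral_of_le zero_le_one,
      integral_exp_mul_complex hc]
    have h2 : (2 * (Real.pi : ℂ) * Complex.I * m) * (1:ℝ) = (m : ℂ) * (2 * Real.pi * Complex.I) := by
      push_cast; ring
    have h3 : (2 * (Real.pi : ℂ) * Complex.I * m) * (0:ℝ) = 0 := by push_cast; ring
    rw [h2, h3, Complex.exp_int_mul_two_pi_mul_I, Complex.exp_zero, sub_self, zero_div]

lemma integral_char {n : ℕ} (c : Fin n → ℤ) :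
    ∫ x, char c x ∂(torusMeasure n) = if c = 0 then 1 else 0 := by
  have hchar : ∀ x : Fin n → ℝ, char c x = ∏ j, oneD (c j) (x j) := by
    intro x
    unfold char oneD
    rw [Finset.mul_sum, Complex.exp_sum]
    exact Finset.prod_congr rfl fun j _ => by congr 1; ring
  simp_rw [hchar]
  rw [torusMeasure_eq_pi]
  have key : (∫ x : Fin n → UnitT, ∏ j, oneD (c j) (x j)) = ∏ j, ∫ y : UnitT, oneD (c j) y :=
    MeasureTheory.integral_fintype_prod_eq_prod (fun j (y : UnitT) => oneD (c j) y)
  have key2 : (∫ x, ∏ j, oneD (c j) (x j)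
        ∂(Measure.pi (fun _ : Fin n => (volume : Measure ℝ).restrict (Set.Ico 0 1))))
      = ∏ j, ∫ y, oneD (c j) y ∂((volume : Measure ℝ).restrict (Set.Ico 0 1)) := key
  rw [key2]
  simp_rw [oneD_integral]
  by_cases hc : c = 0
  · simp [hc]
  · rw [if_neg hc]
    obtain ⟨j, hj⟩ : ∃ j, c j ≠ 0 := by
      by_contra h
      push_neg at h
      exact hc (funext h)
    exact Finset.prod_eq_zero (Finset.mem_univ j) (by rw [if_neg hj])

end ProjAux

namespace ProjAux

section Split

variable {d t : ℕ} (htd : t ≤ d)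

/-- First `t` components of a frequency vector. -/
def pHead (m : Fin d → ℤ) : Fin t → ℤ := fun j => m (Fin.castLE htd j)

/-- Last `d - t` components of a frequency vector. -/
def pTail (m : Fin d → ℤ) : Fin (d - t) → ℤ :=
  fun j => m (Fin.cast (Nat.add_sub_cancel' htd) (Fin.natAdd t j))

lemma head_spec (m : Fin d → ℤ) (i : Fin t) :
    m (Fin.cast (Nat.add_sub_cancel' htd) (Fin.castAdd (d - t) i)) = pHead htd m i := rfl

lemma tail_spec (m : Fin d → ℤ) (i : Fin (d - t)) :
    m (Fin.cast (Nat.add_sub_cancel' htd) (Fin.natAdd t i)) = pTail htd m i := rfl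

lemma glue_head (x : Fin t → ℝ) (ξ : Fin (d - t) → ℝ) (i : Fin t) :
    glue htd x ξ (Fin.cast (Nat.add_sub_cancel' htd) (Fin.castAdd (d - t) i)) = x i :=
  Fin.append_left x ξ i

lemma glue_tail (x : Fin t → ℝ) (ξ : Fin (d - t) → ℝ) (i : Fin (d - t)) :
    glue htd x ξ (Fin.cast (Nat.add_sub_cancel' htd) (Fin.natAdd t i)) = ξ i :=
  Fin.append_right x ξ i

lemma apply_cast (m : Fin d → ℤ) (j' : Fin (t + (d - t))) :
    m (Fin.cast (Nat.add_sub_cancel' htd) j')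
      = Fin.append (pHead htd m) (pTail htd m) j' := by
  induction j' using Fin.addCases with
  | left i => rw [Fin.append_left]; rfl
  | right i => rw [Fin.append_right]; rfl

lemma headTail_inj {m n : Fin d → ℤ} (h1 : pHead htd m = pHead htd n)
    (h2 : pTail htd m = pTail htd n) : m = n := by
  funext j
  rw [show m j = Fin.append (pHead htd m) (pTail htd m)
        (Fin.cast (Nat.add_sub_cancel' htd).symm j) from
      apply_cast htd m (Fin.cast (Nat.add_sub_cancel' htd).symm j),
    show n j = Fin.append (pHead htd n) (pTail htd n)
        (Fin.cast (Nat.add_sub_cancel' htd).symm j) from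
      apply_cast htd n (Fin.cast (Nat.add_sub_cancel' htd).symm j),
    h1, h2]

lemma char_glue (m : Fin d → ℤ) (x : Fin t → ℝ) (ξ : Fin (d - t) → ℝ) :
    char m (glue htd x ξ) = char (pHead htd m) x * char (pTail htd m) ξ := by
  have h0 : ∑ j : Fin d, (m j : ℝ) * glue htd x ξ j
      = ∑ j' : Fin (t + (d - t)), (m (Fin.cast (Nat.add_sub_cancel' htd) j') : ℝ)
          * glue htd x ξ (Fin.cast (Nat.add_sub_cancel' htd) j') :=
    (Fintype.sum_equiv (finCongr (Nat.add_sub_cancel' htd))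
      (fun j' => (m (Fin.cast (Nat.add_sub_cancel' htd) j') : ℝ)
          * glue htd x ξ (Fin.cast (Nat.add_sub_cancel' htd) j'))
      (fun j => (m j : ℝ) * glue htd x ξ j) (fun j' => rfl)).symm
  have hsum : (∑ j : Fin d, (m j : ℝ) * glue htd x ξ j)
      = (∑ i, (pHead htd m i : ℝ) * x i) + ∑ i, (pTail htd m i : ℝ) * ξ i := by
    rw [h0, Fin.sum_univ_add]
    congr 1
    · exact Finset.sum_congr rfl fun i _ => by rw [head_spec htd m, glue_head htd x ξ]
    · exact Finset.sum_congr rfl fun i _ => by rw [tail_spec htd m, glue_tail htd x ξ]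
  rw [char_eq, char_eq, char_eq, ← Complex.exp_add]
  congr 1
  rw [hsum]
  push_cast
  ring

lemma continuous_glue (ξ : Fin (d - t) → ℝ) :
    Continuous fun x : Fin t → ℝ => glue htd x ξ := by
  refine continuous_pi fun j => ?_
  have key : ∀ j' : Fin (t + (d - t)), Continuous fun x : Fin t → ℝ => Fin.append x ξ j' := by
    intro j'
    induction j' using Fin.addCases with
    | left i =>
        simp only [Fin.append_left]
        exact continuous_apply i
    | right i =>
        simp only [Fin.append_right]
        exact continuous_const
  exact key _

end Split

lemma integrable_bdd {n : ℕ} {h : (Fin n → ℝ) → ℂ} (hc : Continuous h) {C : ℝ}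
    (hb : ∀ x, ‖h x‖ ≤ C) : Integrable h (torusMeasure n) :=
  (MeasureTheory.integrable_const C).mono' hc.aestronglyMeasurable
    (Filter.Eventually.of_forall hb)

lemma integral_norm_le {n : ℕ} {h : (Fin n → ℝ) → ℂ} (hc : Continuous h) {C : ℝ}
    (hb : ∀ x, ‖h x‖ ≤ C) : (∫ x, ‖h x‖ ∂(torusMeasure n)) ≤ C := by
  calc (∫ x, ‖h x‖ ∂(torusMeasure n)) ≤ ∫ _x, C ∂(torusMeasure n) :=
        MeasureTheory.integral_mono (integrable_bdd hc hb).norm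
          (MeasureTheory.integrable_const C) hb
  _ = C := by simp

section Series

variable {d t : ℕ} (htd : t ≤ d) {f : (Fin d → ℝ) → ℂ}

lemma hasSum_projCoeff (hf : HasAbsFourierSeries f) (k : Fin t → ℤ) (ξ : Fin (d - t) → ℝ) :
    HasSum (fun m : Fin d → ℤ =>
        if pHead htd m = k then fCoeff f m * char (pTail htd m) ξ else 0)
      (projCoeff htd f k ξ) := by
  classical
  have hconj : ∀ (s : ℕ) (c : Fin s → ℤ), Continuous fun x => (starRingEnd ℂ) (char c x) := by
    intro s c
    simp only [starRingEnd_apply]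
    exact (char_continuous c).star
  have hcont : ∀ m : Fin d → ℤ, Continuous fun x : Fin t → ℝ =>
      fCoeff f m * char m (glue htd x ξ) * (starRingEnd ℂ) (char k x) := by
    intro m
    exact (continuous_const.mul
      ((char_continuous m).comp (continuous_glue htd ξ))).mul (hconj t k)
  have hbF : ∀ (m : Fin d → ℤ) (x : Fin t → ℝ),
      ‖fCoeff f m * char m (glue htd x ξ) * (starRingEnd ℂ) (char k x)‖ = ‖fCoeff f m‖ := by
    intro m x
    simp only [norm_mul, RCLike.norm_conj, norm_char, mul_one]
  have hint : ∀ m : Fin d → ℤ, Integrable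
      (fun x : Fin t → ℝ => fCoeff f m * char m (glue htd x ξ) * (starRingEnd ℂ) (char k x))
      (torusMeasure t) :=
    fun m => integrable_bdd (hcont m) (fun x => (hbF m x).le)
  have hsum : Summable fun m : Fin d → ℤ =>
      ∫ x, ‖fCoeff f m * char m (glue htd x ξ) * (starRingEnd ℂ) (char k x)‖
        ∂(torusMeasure t) := by
    have heq : ∀ m : Fin d → ℤ,
        (∫ x, ‖fCoeff f m * char m (glue htd x ξ) * (starRingEnd ℂ) (char k x)‖
          ∂(torusMeasure t)) = ‖fCoeff f m‖ := by
      intro m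
      simp only [hbF]
      simp
    simp only [heq]
    exact hf.1
  have key := MeasureTheory.hasSum_integral_of_summable_integral_norm hint hsum
  have heq1 : (∫ x, (∑' m : Fin d → ℤ,
      fCoeff f m * char m (glue htd x ξ) * (starRingEnd ℂ) (char k x)) ∂(torusMeasure t))
      = projCoeff htd f k ξ := by
    unfold projCoeff
    refine MeasureTheory.integral_congr_ae (Filter.Eventually.of_forall fun x => ?_)
    dsimp only
    rw [tsum_mul_right, (hf.2 (glue htd x ξ)).tsum_eq]
  have heq2 : ∀ m : Fin d → ℤ, (∫ x,
      fCoeff f m * char m (glue htd x ξ) * (starRingEnd ℂ) (char k x) ∂(torusMeasure t))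
      = if pHead htd m = k then fCoeff f m * char (pTail htd m) ξ else 0 := by
    intro m
    have hFx : ∀ x : Fin t → ℝ,
        fCoeff f m * char m (glue htd x ξ) * (starRingEnd ℂ) (char k x)
          = (fCoeff f m * char (pTail htd m) ξ)
            * (char (pHead htd m) x * (starRingEnd ℂ) (char k x)) := by
      intro x
      rw [char_glue]
      ring
    simp only [hFx, char_mul_conj]
    rw [MeasureTheory.integral_const_mul, integral_char]
    by_cases h : pHead htd m = k
    · simp [h, sub_eq_zero]
    · simp [h, sub_ne_zero.mpr h]
  rw [heq1] at key
  simpa only [heq2] using key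

lemma norm_a_le (hf : HasAbsFourierSeries f) (k : Fin t → ℤ) (ξ : Fin (d - t) → ℝ)
    (m : Fin d → ℤ) :
    ‖if pHead htd m = k then fCoeff f m * char (pTail htd m) ξ else 0‖ ≤ ‖fCoeff f m‖ := by
  split_ifs with h
  · rw [norm_mul, norm_char, mul_one]
  · rw [norm_zero]
    exact norm_nonneg _

lemma norm_projCoeff_le (hf : HasAbsFourierSeries f) (Iδ : Finset (Fin d → ℤ))
    (k : Fin t → ℤ) (ξ : Fin (d - t) → ℝ) :
    ‖projCoeff htd f k ξ‖
      ≤ (∑ m ∈ Iδ.filter (fun m => pHead htd m = k), ‖fCoeff f m‖) + tailSum f Iδ := by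
  classical
  have hsum := hasSum_projCoeff htd hf k ξ
  have hsa : Summable fun m : Fin d → ℤ =>
      ‖if pHead htd m = k then fCoeff f m * char (pTail htd m) ξ else 0‖ :=
    Summable.of_nonneg_of_le (fun _ => norm_nonneg _) (norm_a_le htd hf k ξ) hf.1
  have h1 : ‖projCoeff htd f k ξ‖ ≤ ∑' m : Fin d → ℤ,
      ‖if pHead htd m = k then fCoeff f m * char (pTail htd m) ξ else 0‖ := by
    rw [← hsum.tsum_eq]
    exact norm_tsum_le_tsum_norm hsa
  -- the two comparison families
  have hA'sum : Summable fun m : Fin d → ℤ => if m ∈ Iδ.filter (fun m => pHead htd m = k) then ‖fCoeff f m‖ else 0 := by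
    refine Summable.of_nonneg_of_le (fun m => ?_) (fun m => ?_) hf.1
    · split_ifs
      · exact norm_nonneg _
      · exact le_refl 0
    · split_ifs
      · exact le_refl _
      · exact norm_nonneg _
  have hIndsum : Summable (Set.indicator {m : Fin d → ℤ | m ∉ Iδ} fun m => ‖fCoeff f m‖) :=
    Summable.of_nonneg_of_le (fun m => Set.indicator_nonneg (fun _ _ => norm_nonneg _) m)
      (fun m => Set.indicator_le_self' (fun _ _ => norm_nonneg _) m) hf.1
  have hsplit : ∀ m : Fin d → ℤ,
      ‖if pHead htd m = k then fCoeff f m * char (pTail htd m) ξ else 0‖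
        ≤ (if m ∈ Iδ.filter (fun m => pHead htd m = k) then ‖fCoeff f m‖ else 0)
          + Set.indicator {m : Fin d → ℤ | m ∉ Iδ} (fun m => ‖fCoeff f m‖) m := by
    intro m
    by_cases hI : m ∈ Iδ
    · have hind : Set.indicator {m : Fin d → ℤ | m ∉ Iδ} (fun m => ‖fCoeff f m‖) m = 0 :=
        Set.indicator_of_notMem (by simpa using hI) _
      rw [hind, add_zero]
      by_cases hh : pHead htd m = k
      · rw [if_pos (Finset.mem_filter.mpr ⟨hI, hh⟩)]
        exact norm_a_le htd hf k ξ m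
      · rw [if_neg hh, norm_zero]
        split_ifs
        · exact norm_nonneg _
        · exact le_refl 0
    · have hind : Set.indicator {m : Fin d → ℤ | m ∉ Iδ} (fun m => ‖fCoeff f m‖) m
          = ‖fCoeff f m‖ := Set.indicator_of_mem (by simpa using hI) _
      have hnS : m ∉ Iδ.filter (fun m => pHead htd m = k) := by
        intro hc
        exact hI (Finset.mem_filter.mp hc).1
      rw [hind, if_neg hnS, zero_add]
      exact norm_a_le htd hf k ξ m
  have h2 : (∑' m : Fin d → ℤ,
      ‖if pHead htd m = k then fCoeff f m * char (pTail htd m) ξ else 0‖)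
      ≤ (∑' m : Fin d → ℤ, if m ∈ Iδ.filter (fun m => pHead htd m = k) then ‖fCoeff f m‖ else 0)
        + ∑' m : Fin d → ℤ, Set.indicator {m : Fin d → ℤ | m ∉ Iδ} (fun m => ‖fCoeff f m‖) m := by
    rw [← Summable.tsum_add hA'sum hIndsum]
    exact Summable.tsum_le_tsum hsplit hsa (hA'sum.add hIndsum)
  have h3 : (∑' m : Fin d → ℤ, if m ∈ Iδ.filter (fun m => pHead htd m = k) then ‖fCoeff f m‖ else 0)
      = ∑ m ∈ Iδ.filter (fun m => pHead htd m = k), ‖fCoeff f m‖ := by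
    rw [tsum_eq_sum (s := Iδ.filter (fun m => pHead htd m = k)) (fun m hm => if_neg hm)]
    exact Finset.sum_congr rfl fun m hm => if_pos hm
  have h4 : (∑' m : Fin d → ℤ,
      Set.indicator {m : Fin d → ℤ | m ∉ Iδ} (fun m => ‖fCoeff f m‖) m) = tailSum f Iδ :=
    (tsum_subtype {m : Fin d → ℤ | m ∉ Iδ} (fun m => ‖fCoeff f m‖)).symm
  calc ‖projCoeff htd f k ξ‖
      ≤ _ := h1
  _ ≤ _ := h2
  _ = _ := by rw [h3, h4]

lemma summable_sq (hf : HasAbsFourierSeries f) (k : Fin t → ℤ) :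
    Summable (fun m : Fin d → ℤ => if pHead htd m = k then ‖fCoeff f m‖ ^ 2 else 0) := by
  classical
  have hC : ∀ m, (if pHead htd m = k then ‖fCoeff f m‖ ^ 2 else 0)
      ≤ (∑' m' : Fin d → ℤ, ‖fCoeff f m'‖) * ‖fCoeff f m‖ := by
    intro m
    by_cases h : pHead htd m = k
    · rw [if_pos h, pow_two]
      exact mul_le_mul_of_nonneg_right (Summable.le_tsum hf.1 m fun _ _ => norm_nonneg _) (norm_nonneg _)
    · rw [if_neg h]
      exact mul_nonneg (tsum_nonneg fun _ => norm_nonneg _) (norm_nonneg _)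
  refine Summable.of_nonneg_of_le (fun m => ?_) hC (hf.1.mul_left _)
  split_ifs
  · positivity
  · exact le_rfl

lemma L2sq_projCoeff (hf : HasAbsFourierSeries f) (k : Fin t → ℤ) :
    L2sq (projCoeff htd f k)
      = ∑' m : Fin d → ℤ, (if pHead htd m = k then ‖fCoeff f m‖ ^ 2 else 0) := by
  classical
  set a : (Fin d → ℤ) → (Fin (d - t) → ℝ) → ℂ :=
    fun m ξ => if pHead htd m = k then fCoeff f m * char (pTail htd m) ξ else 0 with ha
  have hbound : ∀ m ξ, ‖a m ξ‖ ≤ ‖fCoeff f m‖ := fun m ξ => norm_a_le htd hf k ξ m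
  have hcont : ∀ m, Continuous (a m) := by
    intro m
    simp only [ha]
    by_cases h : pHead htd m = k
    · simp only [h, if_true]
      exact continuous_const.mul (char_continuous _)
    · simp only [h, if_false]
      exact continuous_const
  set G : ((Fin d → ℤ) × (Fin d → ℤ)) → (Fin (d - t) → ℝ) → ℂ :=
    fun p ξ => a p.1 ξ * (starRingEnd ℂ) (a p.2 ξ) with hG
  have hGcont : ∀ p, Continuous (G p) := by
    intro p
    simp only [hG, starRingEnd_apply]
    exact (hcont p.1).mul (hcont p.2).star
  have hGbound : ∀ p ξ, ‖G p ξ‖ ≤ ‖fCoeff f p.1‖ * ‖fCoeff f p.2‖ := by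
    intro p ξ
    simp only [hG]
    rw [norm_mul, RCLike.norm_conj]
    exact mul_le_mul (hbound _ _) (hbound _ _) (norm_nonneg _) (norm_nonneg _)
  have hGint : ∀ p, Integrable (G p) (torusMeasure (d - t)) :=
    fun p => integrable_bdd (hGcont p) (fun ξ => hGbound p ξ)
  have hsumprod : Summable fun p : (Fin d → ℤ) × (Fin d → ℤ) =>
      ‖fCoeff f p.1‖ * ‖fCoeff f p.2‖ :=
    hf.1.mul_of_nonneg hf.1 (fun _ => norm_nonneg _) (fun _ => norm_nonneg _)
  have hGnorm : Summable fun p => ∫ ξ, ‖G p ξ‖ ∂(torusMeasure (d - t)) :=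
    Summable.of_nonneg_of_le
      (fun p => MeasureTheory.integral_nonneg fun ξ => norm_nonneg _)
      (fun p => integral_norm_le (hGcont p) (fun ξ => hGbound p ξ)) hsumprod
  have key := MeasureTheory.hasSum_integral_of_summable_integral_norm hGint hGnorm
  have hsq : ∀ ξ, (∑' p : (Fin d → ℤ) × (Fin d → ℤ), G p ξ)
      = ((‖projCoeff htd f k ξ‖ ^ 2 : ℝ) : ℂ) := by
    intro ξ
    have h1 : HasSum (fun m => a m ξ) (projCoeff htd f k ξ) := hasSum_projCoeff htd hf k ξ
    have h2 : HasSum (fun m => (starRingEnd ℂ) (a m ξ))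
        ((starRingEnd ℂ) (projCoeff htd f k ξ)) := Complex.hasSum_conj'.mpr h1
    have hs3 : Summable fun p : (Fin d → ℤ) × (Fin d → ℤ) =>
        a p.1 ξ * (starRingEnd ℂ) (a p.2 ξ) :=
      Summable.of_norm_bounded hsumprod (fun p => hGbound p ξ)
    have h4 := h1.mul h2 hs3
    have h5 : (∑' p : (Fin d → ℤ) × (Fin d → ℤ), G p ξ)
        = projCoeff htd f k ξ * (starRingEnd ℂ) (projCoeff htd f k ξ) := h4.tsum_eq
    rw [h5, Complex.mul_conj, Complex.normSq_eq_norm_sq]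
  have hGcalc : ∀ p : (Fin d → ℤ) × (Fin d → ℤ),
      (∫ ξ, G p ξ ∂(torusMeasure (d - t)))
        = if p.1 = p.2 ∧ pHead htd p.1 = k then ((‖fCoeff f p.1‖ ^ 2 : ℝ) : ℂ) else 0 := by
    rintro ⟨m, n⟩
    by_cases hm : pHead htd m = k
    · by_cases hn : pHead htd n = k
      · have hGval : ∀ ξ, G (m, n) ξ = (fCoeff f m * (starRingEnd ℂ) (fCoeff f n))
            * char (pTail htd m - pTail htd n) ξ := by
          intro ξ
          simp only [hG, ha, if_pos hm, if_pos hn]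
          rw [map_mul, ← char_mul_conj]
          ring
        simp only [hGval]
        rw [MeasureTheory.integral_const_mul, integral_char]
        by_cases hmn : m = n
        · subst hmn
          rw [sub_self, if_pos rfl, mul_one,
            if_pos (⟨rfl, hm⟩ : m = m ∧ pHead htd m = k), Complex.mul_conj,
            Complex.normSq_eq_norm_sq]
        · have hne : pTail htd m - pTail htd n ≠ 0 :=
            fun h => hmn (headTail_inj htd (hm.trans hn.symm) (sub_eq_zero.mp h))
          rw [if_neg hne, mul_zero, if_neg (by rintro ⟨h1, -⟩; exact hmn h1)]
      · have hz : ∀ ξ, G (m, n) ξ = 0 := by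
          intro ξ
          simp only [hG, ha]
          simp [hn]
        simp only [hz]
        rw [MeasureTheory.integral_zero, if_neg (by rintro ⟨h1, -⟩; exact hn (h1 ▸ hm))]
    · have hz : ∀ ξ, G (m, n) ξ = 0 := by
        intro ξ
        simp only [hG, ha]
        simp [hm]
      simp only [hz]
      rw [MeasureTheory.integral_zero, if_neg (by rintro ⟨-, h2⟩; exact hm h2)]
  have keyfun : HasSum (fun p : (Fin d → ℤ) × (Fin d → ℤ) =>
      if p.1 = p.2 ∧ pHead htd p.1 = k then ((‖fCoeff f p.1‖ ^ 2 : ℝ) : ℂ) else 0)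
      (∫ ξ, (∑' p : (Fin d → ℤ) × (Fin d → ℤ), G p ξ) ∂(torusMeasure (d - t))) := by
    simpa only [hGcalc] using key
  have hdiag : HasSum (fun m : Fin d → ℤ =>
      if pHead htd m = k then ((‖fCoeff f m‖ ^ 2 : ℝ) : ℂ) else 0)
      (∫ ξ, (∑' p : (Fin d → ℤ) × (Fin d → ℤ), G p ξ) ∂(torusMeasure (d - t))) := by
    have hinj : Function.Injective (fun m : Fin d → ℤ => (m, m)) :=
      fun a b h => congrArg Prod.fst h
    have h0 : ∀ p ∉ Set.range (fun m : Fin d → ℤ => (m, m)),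
        (if p.1 = p.2 ∧ pHead htd p.1 = k then ((‖fCoeff f p.1‖ ^ 2 : ℝ) : ℂ) else 0) = 0 := by
      intro p hp
      rw [if_neg]
      rintro ⟨h1, -⟩
      exact hp ⟨p.1, Prod.ext rfl h1⟩
    have hds := (hinj.hasSum_iff h0).mpr keyfun
    have hcomp : ((fun p : (Fin d → ℤ) × (Fin d → ℤ) =>
        if p.1 = p.2 ∧ pHead htd p.1 = k then ((‖fCoeff f p.1‖ ^ 2 : ℝ) : ℂ) else 0)
          ∘ (fun m : Fin d → ℤ => (m, m)))
        = fun m : Fin d → ℤ => if pHead htd m = k then ((‖fCoeff f m‖ ^ 2 : ℝ) : ℂ) else 0 := by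
      funext m
      simp [Function.comp]
    exact hcomp ▸ hds
  have hR : HasSum (fun m : Fin d → ℤ =>
      ((if pHead htd m = k then ‖fCoeff f m‖ ^ 2 else 0 : ℝ) : ℂ))
      (((∑' m : Fin d → ℤ, (if pHead htd m = k then ‖fCoeff f m‖ ^ 2 else 0) : ℝ)) : ℂ) :=
    Complex.hasSum_ofReal.mpr (summable_sq htd hf k).hasSum
  have hfun : (fun m : Fin d → ℤ =>
      ((if pHead htd m = k then ‖fCoeff f m‖ ^ 2 else 0 : ℝ) : ℂ))
      = fun m : Fin d → ℤ => if pHead htd m = k then ((‖fCoeff f m‖ ^ 2 : ℝ) : ℂ) else 0 := by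
    funext m
    split <;> simp
  rw [hfun] at hR
  have huniq := hR.unique hdiag
  have hL : (∫ ξ, (∑' p : (Fin d → ℤ) × (Fin d → ℤ), G p ξ) ∂(torusMeasure (d - t)))
      = ((L2sq (projCoeff htd f k) : ℝ) : ℂ) :=
    calc (∫ ξ, (∑' p : (Fin d → ℤ) × (Fin d → ℤ), G p ξ) ∂(torusMeasure (d - t)))
        = ∫ ξ, ((‖projCoeff htd f k ξ‖ ^ 2 : ℝ) : ℂ) ∂(torusMeasure (d - t)) :=
          MeasureTheory.integral_congr_ae (Filter.Eventually.of_forall hsq)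
    _ = _ := integral_ofReal
  exact (Complex.ofReal_inj.mp (huniq.trans hL)).symm

end Series

end ProjAux

set_option maxHeartbeats 1000000 in
/-- for `k ∈ P_{{1,…,t}}(I_δ)` and `0 < δ' ≤ δ/√2`, the projected
coefficient function `g_k = f̂_{{1,…,t},k}(·)` satisfies `‖g_k‖₂² - δ'² > 0` and
`‖g_k‖_∞² / (‖g_k‖₂² - δ'²) ≤ 4|I_δ| + (4/δ²)(∑_{l ∉ I_δ}|f̂_l|)²`. -/
theorem projCoeff_detection_ratio {d t : ℕ} (ht1 : 1 ≤ t) (htd : t ≤ d)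
    (f : (Fin d → ℝ) → ℂ) (hf : HasAbsFourierSeries f)
    (δ : ℝ) (hδ : 0 < δ)
    (Iδ : Finset (Fin d → ℤ)) (hIδ : ∀ k, k ∈ Iδ ↔ δ ≤ ‖fCoeff f k‖)
    (hne : Iδ.Nonempty)
    (k : Fin t → ℤ) (hk : k ∈ projFreq htd Iδ)
    (δ' : ℝ) (hδ'0 : 0 < δ') (hδ' : δ' ≤ δ / Real.sqrt 2) :
    0 < L2sq (projCoeff htd f k) - δ' ^ 2 ∧
      supNorm (projCoeff htd f k) ^ 2 / (L2sq (projCoeff htd f k) - δ' ^ 2) ≤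
        4 * (Iδ.card : ℝ) + 4 / δ ^ 2 * tailSum f Iδ ^ 2 := by
  classical
  set S : Finset (Fin d → ℤ) := Iδ.filter (fun m => ProjAux.pHead htd m = k) with hS
  set A : ℝ := ∑ m ∈ S, ‖fCoeff f m‖ with hA
  set T : ℝ := tailSum f Iδ with hT
  set Q : ℝ := ∑ m ∈ S, ‖fCoeff f m‖ ^ 2 with hQ
  have hL2 : L2sq (projCoeff htd f k)
      = ∑' m : Fin d → ℤ, (if ProjAux.pHead htd m = k then ‖fCoeff f m‖ ^ 2 else 0) :=
    ProjAux.L2sq_projCoeff htd hf k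
  have hRsum := ProjAux.summable_sq htd hf k
  have hQL : Q ≤ L2sq (projCoeff htd f k) := by
    rw [hL2, hQ]
    have hcongr : ∀ m ∈ S, ‖fCoeff f m‖ ^ 2
        = (if ProjAux.pHead htd m = k then ‖fCoeff f m‖ ^ 2 else 0) := fun m hm => by
      rw [if_pos (Finset.mem_filter.mp hm).2]
    rw [Finset.sum_congr rfl hcongr]
    refine Summable.sum_le_tsum S (fun m _ => ?_) hRsum
    split_ifs
    · positivity
    · exact le_rfl
  obtain ⟨m0, hm0I, hm0k⟩ := Finset.mem_image.mp hk
  have hm0S : m0 ∈ S := Finset.mem_filter.mpr ⟨hm0I, hm0k⟩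
  have hδm0 : δ ≤ ‖fCoeff f m0‖ := (hIδ m0).mp hm0I
  have hδQ : δ ^ 2 ≤ Q := by
    refine le_trans (pow_le_pow_left₀ hδ.le hδm0 2) ?_
    exact Finset.single_le_sum (f := fun m => ‖fCoeff f m‖ ^ 2) (fun m _ => by positivity) hm0S
  have hδ'2 : δ' ^ 2 ≤ δ ^ 2 / 2 := by
    have h1 : δ' ^ 2 ≤ (δ / Real.sqrt 2) ^ 2 := pow_le_pow_left₀ hδ'0.le hδ' 2
    rwa [div_pow, Real.sq_sqrt (by norm_num : (0:ℝ) ≤ 2)] at h1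
  have hLpos : 0 < L2sq (projCoeff htd f k) - δ' ^ 2 := by nlinarith
  refine ⟨hLpos, ?_⟩
  have hT0 : 0 ≤ T := tsum_nonneg (fun m => norm_nonneg _)
  have hA0 : 0 ≤ A := Finset.sum_nonneg fun m _ => norm_nonneg _
  have hN : supNorm (projCoeff htd f k) ≤ A + T := by
    have hAT : 0 ≤ A + T := add_nonneg hA0 hT0
    refine Real.iSup_le (fun x => Real.iSup_le (fun _ => ?_) hAT) hAT
    exact ProjAux.norm_projCoeff_le htd hf Iδ k x
  have hN0 : 0 ≤ supNorm (projCoeff htd f k) :=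
    Real.iSup_nonneg fun x => Real.iSup_nonneg fun _ => norm_nonneg _
  have hcard : (S.card : ℝ) ≤ (Iδ.card : ℝ) := by
    exact_mod_cast Finset.card_le_card (Finset.filter_subset _ _)
  have hQ0 : (0:ℝ) ≤ Q := Finset.sum_nonneg fun m _ => by positivity
  have hAQ : A ^ 2 ≤ (Iδ.card : ℝ) * Q := by
    refine le_trans sq_sum_le_card_mul_sum_sq ?_
    exact mul_le_mul_of_nonneg_right hcard hQ0
  rw [div_le_iff₀ hLpos]
  set L : ℝ := L2sq (projCoeff htd f k)
  have hNsq : supNorm (projCoeff htd f k) ^ 2 ≤ 2 * A ^ 2 + 2 * T ^ 2 := by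
    nlinarith [sq_nonneg (A - T)]
  have hHalf : δ ^ 2 / 2 ≤ L - δ' ^ 2 := by nlinarith
  have hQhalf : Q / 2 ≤ L - δ' ^ 2 := by nlinarith
  have hTterm : 2 * T ^ 2 ≤ 4 / δ ^ 2 * T ^ 2 * (L - δ' ^ 2) := by
    have h1 : 4 / δ ^ 2 * T ^ 2 * (δ ^ 2 / 2) ≤ 4 / δ ^ 2 * T ^ 2 * (L - δ' ^ 2) :=
      mul_le_mul_of_nonneg_left hHalf (by positivity)
    have h2 : 4 / δ ^ 2 * T ^ 2 * (δ ^ 2 / 2) = 2 * T ^ 2 := by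
      field_simp
      ring
    linarith
  have hAterm : 2 * (Iδ.card : ℝ) * Q ≤ 4 * (Iδ.card : ℝ) * (L - δ' ^ 2) := by
    have h1 : 4 * (Iδ.card : ℝ) * (Q / 2) ≤ 4 * (Iδ.card : ℝ) * (L - δ' ^ 2) :=
      mul_le_mul_of_nonneg_left hQhalf (by positivity)
    linarith
  nlinarith [hNsq, hAQ, hAterm, hTterm]
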